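/- Let b ≥ 1 and define f : ℕ → ℕ by f(1) = 0 and f(s) = ⌊(s/(s-1)) · (f(s-1) + b)⌋ for s ≥ 2. Then for all s ≥ 1, f(s) ≥ (b-1) · s · ∑_{i=1}^{s-1} (1/i), where the sum is taken over the reals. -/

import Mathlib

theorem stmt_0 (b : ℕ) (hb : 1 ≤ b) (f : ℕ → ℕ)
    (hf1 : f 1 = 0)
    (hfrec : ∀ s : ℕ, 2 ≤ s →
      f s = Nat.floor (((s : ℝ) / ((s : ℝ) - 1)) * ((f (s - 1) : ℝ) + (b : ℝ)))) :
    ∀ s : ℕ, 1 ≤ s →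
      ((b : ℝ) - 1) * (s : ℝ) * (∑ i ∈ Finset.Icc 1 (s - 1), (1 : ℝ) / (i : ℝ)) ≤ (f s : ℝ) := by
  intro s hs
  induction s, hs using Nat.le_induction with
  | base => simp [hf1]
  | succ n hn ih =>
    obtain ⟨m, rfl⟩ : ∃ m, n = m + 1 := ⟨n - 1, by omega⟩
    have hrec := hfrec (m + 2) (by omega)
    have hfloor : ((m + 2 : ℕ) : ℝ) / (((m + 2 : ℕ) : ℝ) - 1) *
        ((f ((m + 2) - 1) : ℝ) + (b : ℝ)) - 1 < (f (m + 2) : ℝ) := by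
      rw [hrec]
      exact Nat.sub_one_lt_floor _
    have hsub : (m + 2) - 1 = m + 1 := by omega
    rw [hsub] at hfloor
    have hsum : ∑ i ∈ Finset.Icc 1 ((m + 1 + 1) - 1), (1 : ℝ) / (i : ℝ)
        = (∑ i ∈ Finset.Icc 1 m, (1 : ℝ) / (i : ℝ)) + 1 / ((m + 1 : ℕ) : ℝ) := by
      have h1 : (m + 1 + 1) - 1 = m + 1 := by omega
      rw [h1, Finset.sum_Icc_succ_top (by omega : 1 ≤ m + 1)]
    have hsub2 : (m + 1) - 1 = m := by omega
    rw [hsub2] at ih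
    rw [hsum]
    set S := ∑ i ∈ Finset.Icc 1 m, (1 : ℝ) / (i : ℝ) with hS
    have hb' : (1 : ℝ) ≤ (b : ℝ) := by exact_mod_cast hb
    have hm : (0 : ℝ) ≤ (m : ℝ) := Nat.cast_nonneg m
    have hpos : (0 : ℝ) < ((m : ℝ) + 1) := by linarith
    push_cast at hfloor ih ⊢
    have key : ((b : ℝ) - 1) * ((m : ℝ) + 1 + 1) * (S + 1 / ((m : ℝ) + 1)) ≤
        ((m : ℝ) + 2) / ((m : ℝ) + 2 - 1) * ((f (m + 1) : ℝ) + (b : ℝ)) - 1 := by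
      have h2 : ((m : ℝ) + 2 - 1) = (m : ℝ) + 1 := by ring
      have hinv : 1 / ((m : ℝ) + 1) * ((m : ℝ) + 1) = 1 := by field_simp
      have h3 : ((b : ℝ) - 1) * ((m : ℝ) + 2) * (1 / ((m : ℝ) + 1)) * ((m : ℝ) + 1)
          = ((b : ℝ) - 1) * ((m : ℝ) + 2) := by
        calc ((b : ℝ) - 1) * ((m : ℝ) + 2) * (1 / ((m : ℝ) + 1)) * ((m : ℝ) + 1)
            = ((b : ℝ) - 1) * ((m : ℝ) + 2) * (1 / ((m : ℝ) + 1) * ((m : ℝ) + 1)) := by ring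
          _ = ((b : ℝ) - 1) * ((m : ℝ) + 2) := by rw [hinv]; ring
      have h4 := mul_le_mul_of_nonneg_left ih (by linarith : (0 : ℝ) ≤ (m : ℝ) + 2)
      rw [h2, div_mul_eq_mul_div, le_sub_iff_add_le, le_div_iff₀ hpos]
      nlinarith [h3, h4, hb', hm]
    calc ((b : ℝ) - 1) * ((m : ℝ) + 1 + 1) * (S + 1 / ((m : ℝ) + 1))
        ≤ ((m : ℝ) + 2) / ((m : ℝ) + 2 - 1) * ((f (m + 1) : ℝ) + (b : ℝ)) - 1 := key
      _ ≤ (f (m + 2) : ℝ) := le_of_lt hfloor
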